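/- Let (X,d) be a b-metric space with constant s ≥ 1, and let (x_n) be a sequence in X. If there exists γ > log₂ s such that the series Σ_{n≥1} n^γ · d(x_n, x_{n+1}) converges, then (x_n) is a Cauchy sequence. -/

import Mathlib

/-- Dyadic chaining: crossing at most `2^k` steps costs a factor `s^k`. -/
theorem bmetric_aux_dyadic {X : Type*} (d : X → X → ℝ) (s : ℝ) (hs : 1 ≤ s)
    (hd0 : ∀ x y, 0 ≤ d x y) (hrefl : ∀ z : X, d z z = 0)
    (htri : ∀ x y z, d x y ≤ s * (d x z + d z y)) (x : ℕ → X) :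
    ∀ (k a b : ℕ), a ≤ b → b ≤ a + 2 ^ k →
      d (x a) (x b) ≤ s ^ k * ∑ i ∈ Finset.Ico a b, d (x i) (x (i + 1)) := by
  have hs0 : (0:ℝ) ≤ s := le_trans zero_le_one hs
  intro k
  induction k with
  | zero =>
    intro a b hab hb
    rcases Nat.eq_or_lt_of_le hab with h | h
    · subst h
      simp [hrefl]
    · have hba : b = a + 1 := le_antisymm hb h
      subst hba
      simp
  | succ k ih =>
    intro a b hab hb
    by_cases h : b ≤ a + 2 ^ k
    · have h1 := ih a b hab h
      have h2 : s ^ k ≤ s ^ (k + 1) := pow_le_pow_right₀ hs (Nat.le_succ k)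
      have h3 : (0:ℝ) ≤ ∑ i ∈ Finset.Ico a b, d (x i) (x (i + 1)) :=
        Finset.sum_nonneg fun i _ => hd0 _ _
      calc d (x a) (x b) ≤ s ^ k * ∑ i ∈ Finset.Ico a b, d (x i) (x (i + 1)) := h1
        _ ≤ s ^ (k+1) * ∑ i ∈ Finset.Ico a b, d (x i) (x (i + 1)) :=
            mul_le_mul_of_nonneg_right h2 h3
    · push_neg at h
      set c := a + 2 ^ k with hc
      have hac : a ≤ c := Nat.le_add_right _ _
      have hcb : c ≤ b := h.le
      have hb2 : b ≤ c + 2 ^ k := by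
        have : (2:ℕ) ^ (k+1) = 2 ^ k + 2 ^ k := by ring
        omega
      have h1 := ih a c hac le_rfl
      have h2 := ih c b hcb hb2
      have hsum : ∑ i ∈ Finset.Ico a c, d (x i) (x (i+1)) +
          ∑ i ∈ Finset.Ico c b, d (x i) (x (i+1)) =
          ∑ i ∈ Finset.Ico a b, d (x i) (x (i+1)) :=
        Finset.sum_Ico_consecutive _ hac hcb
      calc d (x a) (x b) ≤ s * (d (x a) (x c) + d (x c) (x b)) := htri _ _ _
        _ ≤ s * (s ^ k * ∑ i ∈ Finset.Ico a c, d (x i) (x (i+1)) +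
              s ^ k * ∑ i ∈ Finset.Ico c b, d (x i) (x (i+1))) := by
            have := add_le_add h1 h2
            exact mul_le_mul_of_nonneg_left this hs0
        _ = s ^ (k+1) * (∑ i ∈ Finset.Ico a c, d (x i) (x (i+1)) +
              ∑ i ∈ Finset.Ico c b, d (x i) (x (i+1))) := by ring
        _ = s ^ (k+1) * ∑ i ∈ Finset.Ico a b, d (x i) (x (i+1)) := by rw [hsum]

/-- Linear chaining with geometric weights. -/
theorem bmetric_aux_chain {X : Type*} (d : X → X → ℝ) (s : ℝ) (hs : 1 ≤ s)
    (hrefl : ∀ z : X, d z z = 0)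
    (htri : ∀ x y z, d x y ≤ s * (d x z + d z y)) :
    ∀ (t : ℕ) (y : ℕ → X),
      d (y 0) (y t) ≤ ∑ j ∈ Finset.range t, s ^ (j+1) * d (y j) (y (j+1)) := by
  have hs0 : (0:ℝ) ≤ s := le_trans zero_le_one hs
  intro t
  induction t with
  | zero => intro y; simp [hrefl]
  | succ t ih =>
    intro y
    have hy := ih (fun j => y (j + 1))
    calc d (y 0) (y (t+1)) ≤ s * (d (y 0) (y 1) + d (y 1) (y (t+1))) := htri _ _ _
      _ ≤ s * (d (y 0) (y 1) +
            ∑ j ∈ Finset.range t, s ^ (j+1) * d (y (j+1)) (y (j+2))) := by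
          have : d (y 1) (y (t+1)) ≤
              ∑ j ∈ Finset.range t, s ^ (j+1) * d (y (j+1)) (y (j+2)) := hy
          nlinarith [this, hs0]
      _ = s * d (y 0) (y 1) +
            ∑ j ∈ Finset.range t, s ^ (j+2) * d (y (j+1)) (y (j+2)) := by
          rw [mul_add, Finset.mul_sum]
          congr 1
          refine Finset.sum_congr rfl fun j _ => by ring
      _ = ∑ j ∈ Finset.range (t+1), s ^ (j+1) * d (y j) (y (j+1)) := by
          rw [Finset.sum_range_succ' (fun j => s ^ (j+1) * d (y j) (y (j+1))) t,
            add_comm]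
          congr 1
          ring

theorem bmetric_cauchy_of_summable_rpow
    (X : Type*) (d : X → X → ℝ) (s : ℝ) (hs : 1 ≤ s)
    (hd_nonneg : ∀ x y, 0 ≤ d x y)
    (hd_eq : ∀ x y, d x y = 0 ↔ x = y)
    (hd_symm : ∀ x y, d x y = d y x)
    (hd_tri : ∀ x y z, d x y ≤ s * (d x z + d z y))
    (x : ℕ → X) (γ : ℝ) (hγ : Real.logb 2 s < γ)
    (hsum : Summable (fun n : ℕ => (n : ℝ) ^ γ * d (x n) (x (n + 1)))) :
    ∀ ε > 0, ∃ N : ℕ, ∀ m ≥ N, ∀ n ≥ N, d (x m) (x n) < ε := by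
  have hrefl : ∀ z : X, d z z = 0 := fun z => (hd_eq z z).mpr rfl
  have hs0 : (0:ℝ) < s := lt_of_lt_of_le one_pos hs
  set ν := Real.logb 2 s with hνdef
  have hν0 : (0:ℝ) ≤ ν := Real.logb_nonneg one_lt_two hs
  have hγ0 : (0:ℝ) < γ := lt_of_le_of_lt hν0 hγ
  have hγν : (0:ℝ) < γ - ν := sub_pos.mpr hγ
  obtain ⟨R, hRge⟩ := exists_nat_ge ((ν + 1) / (γ - ν))
  have hR' : ν + 1 ≤ (R:ℝ) * (γ - ν) := by
    rw [div_le_iff₀ hγν] at hRge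
    linarith
  have hR1 : 1 ≤ R := by
    rcases Nat.eq_zero_or_pos R with h | h
    · exfalso; rw [h] at hR'; push_cast at hR'; linarith
    · exact h
  have h2ν : (2:ℝ) ^ ν = s := Real.rpow_logb (by norm_num) (by norm_num) hs0
  have e1 : ∀ t : ℕ, s ^ t = (2:ℝ) ^ ((t:ℝ) * ν) := by
    intro t
    rw [mul_comm (t:ℝ) ν, Real.rpow_mul (by norm_num : (0:ℝ) ≤ 2), h2ν,
      Real.rpow_natCast]
  set C := 2 * s ^ (R + 2) with hCdef
  have hC0 : (0:ℝ) < C := by positivity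
  intro ε hε
  -- tail control from summability
  have hvan := summable_iff_vanishing.mp hsum (Set.Iio (ε / C))
    (Iio_mem_nhds (by positivity))
  obtain ⟨s₀, hs₀⟩ := hvan
  set N₀ := s₀.sup id + 1 with hN₀def
  have htail : ∀ p q : ℕ, N₀ ≤ p →
      (∑ i ∈ Finset.Ico p q, (i:ℝ) ^ γ * d (x i) (x (i+1))) < ε / C := by
    intro p q hp
    have hdisj : Disjoint (Finset.Ico p q) s₀ := by
      rw [Finset.disjoint_left]
      intro i hi his
      have h1 : i ≤ s₀.sup id := Finset.le_sup (f := id) his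
      have h2 : p ≤ i := (Finset.mem_Ico.mp hi).1
      omega
    exact hs₀ _ hdisj
  refine ⟨max N₀ 1, ?_⟩
  have key : ∀ p q : ℕ, max N₀ 1 ≤ p → p ≤ q → d (x p) (x q) < ε := by
    intro p q hp hpq
    have hp1 : 1 ≤ p := le_trans (le_max_right _ _) hp
    have hpN : N₀ ≤ p := le_trans (le_max_left _ _) hp
    set T := ∑ i ∈ Finset.Ico p q, (i:ℝ) ^ γ * d (x i) (x (i+1)) with hTdef
    have hT0 : (0:ℝ) ≤ T :=
      Finset.sum_nonneg fun i _ =>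
        mul_nonneg (Real.rpow_nonneg (Nat.cast_nonneg i) γ) (hd_nonneg _ _)
    have hTlt : T < ε / C := htail p q hpN
    set B : ℕ := 2 ^ R with hBdef
    have hB1 : 1 ≤ B := Nat.one_le_pow _ _ (by norm_num)
    have hB2 : 2 ≤ B := by
      calc 2 = 2 ^ 1 := (pow_one 2).symm
        _ ≤ 2 ^ R := Nat.pow_le_pow_right (by norm_num) hR1
    set M : ℕ := Nat.log 2 p + 1 with hMdef
    have hpM : p ≤ 2 ^ M := le_of_lt (Nat.lt_pow_succ_log_self (by norm_num) p)
    set c : ℕ → ℕ := fun j => min (p * B ^ j) q with hcdef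
    have hc0 : c 0 = p := by
      simp only [hcdef, pow_zero, mul_one]
      exact min_eq_left hpq
    have hcq : c q = q := by
      have h1 : q < 2 ^ q := Nat.lt_two_pow_self
      have h2 : (2:ℕ) ^ q ≤ B ^ q := Nat.pow_le_pow_left hB2 q
      have h3 : B ^ q ≤ p * B ^ q := Nat.le_mul_of_pos_left _ (by omega)
      exact min_eq_right (by omega)
    have hmono : ∀ j, c j ≤ c (j+1) := by
      intro j
      refine min_le_min (Nat.mul_le_mul le_rfl ?_) le_rfl
      exact Nat.pow_le_pow_right (by omega) (Nat.le_succ j)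
    have hcge : ∀ j, p ≤ c j := by
      intro j
      refine le_min ?_ hpq
      exact Nat.le_mul_of_pos_right _ (Nat.pow_pos (by omega))
    have hcle : ∀ j, c j ≤ q := fun j => min_le_right _ _
    have hlen : ∀ j, c (j+1) ≤ c j + 2 ^ (M + R * (j+1)) := by
      intro j
      have h1 : c (j+1) ≤ p * B ^ (j+1) := min_le_left _ _
      have h2 : p * B ^ (j+1) ≤ 2 ^ M * B ^ (j+1) := Nat.mul_le_mul hpM le_rfl
      have h3 : (2:ℕ) ^ M * B ^ (j+1) = 2 ^ (M + R * (j+1)) := by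
        rw [hBdef, ← pow_mul, ← pow_add]
      have : c (j+1) ≤ 2 ^ (M + R * (j+1)) := by omega
      omega
    set W : ℕ → ℝ := fun j => ((p * B ^ j : ℕ) : ℝ) ^ γ with hWdef
    have hWpos : ∀ j, (0:ℝ) < W j := by
      intro j
      apply Real.rpow_pos_of_pos
      have : 0 < p * B ^ j := Nat.mul_pos (by omega) (Nat.pow_pos (by omega))
      exact_mod_cast this
    have hWsplit : ∀ j, W j = (p:ℝ) ^ γ * ((2:ℝ) ^ (R * j)) ^ γ := by
      intro j
      have hcast : ((p * B ^ j : ℕ) : ℝ) = (p:ℝ) * (2:ℝ) ^ (R * j) := by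
        push_cast [hBdef]
        rw [← pow_mul]
      simp only [hWdef]
      rw [hcast, Real.mul_rpow (Nat.cast_nonneg p) (by positivity)]
    -- the sum over one block is controlled by T
    have hseg : ∀ j, (∑ i ∈ Finset.Ico (c j) (c (j+1)), d (x i) (x (i+1))) ≤ T / W j := by
      intro j
      rw [le_div_iff₀ (hWpos j)]
      have hsub : Finset.Ico (c j) (c (j+1)) ⊆ Finset.Ico p q := by
        intro i hi
        obtain ⟨hi1, hi2⟩ := Finset.mem_Ico.mp hi
        exact Finset.mem_Ico.mpr ⟨le_trans (hcge j) hi1, lt_of_lt_of_le hi2 (hcle (j+1))⟩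
      calc (∑ i ∈ Finset.Ico (c j) (c (j+1)), d (x i) (x (i+1))) * W j
          = ∑ i ∈ Finset.Ico (c j) (c (j+1)), d (x i) (x (i+1)) * W j := by
            rw [Finset.sum_mul]
        _ ≤ ∑ i ∈ Finset.Ico (c j) (c (j+1)), (i:ℝ) ^ γ * d (x i) (x (i+1)) := by
            refine Finset.sum_le_sum fun i hi => ?_
            obtain ⟨hi1, hi2⟩ := Finset.mem_Ico.mp hi
            have hjn : c j < q := lt_of_le_of_lt hi1 (lt_of_lt_of_le hi2 (hcle (j+1)))
            have hcjeq : c j = p * B ^ j := by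
              rcases le_or_gt (p * B ^ j) q with h | h
              · exact min_eq_left h
              · exfalso
                have : c j = q := min_eq_right h.le
                omega
            have hple : p * B ^ j ≤ i := by omega
            have hWle : W j ≤ (i:ℝ) ^ γ := by
              simp only [hWdef]
              exact Real.rpow_le_rpow (Nat.cast_nonneg _) (Nat.cast_le.mpr hple) hγ0.le
            calc d (x i) (x (i+1)) * W j ≤ d (x i) (x (i+1)) * (i:ℝ) ^ γ :=
                  mul_le_mul_of_nonneg_left hWle (hd_nonneg _ _)
              _ = (i:ℝ) ^ γ * d (x i) (x (i+1)) := mul_comm _ _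
        _ ≤ T := by
            refine Finset.sum_le_sum_of_subset_of_nonneg hsub fun i _ _ => ?_
            exact mul_nonneg (Real.rpow_nonneg (Nat.cast_nonneg i) γ) (hd_nonneg _ _)
    -- coefficient bound
    have hsM : s ^ M ≤ s * (p:ℝ) ^ γ := by
      have hL : (2:ℝ) ^ ((Nat.log 2 p : ℕ) : ℝ) ≤ (p:ℝ) := by
        rw [Real.rpow_natCast]
        exact_mod_cast Nat.pow_log_le_self 2 (by omega : p ≠ 0)
      have h1 : s ^ (Nat.log 2 p) ≤ (p:ℝ) ^ ν := by
        rw [e1 (Nat.log 2 p), Real.rpow_mul (by norm_num : (0:ℝ) ≤ 2)]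
        exact Real.rpow_le_rpow (Real.rpow_nonneg (by norm_num) _) hL hν0
      have h2 : (p:ℝ) ^ ν ≤ (p:ℝ) ^ γ :=
        Real.rpow_le_rpow_of_exponent_le (by exact_mod_cast hp1) hγ.le
      calc s ^ M = s ^ (Nat.log 2 p) * s := by rw [hMdef, pow_succ]
        _ ≤ (p:ℝ) ^ γ * s :=
            mul_le_mul_of_nonneg_right (h1.trans h2) hs0.le
        _ = s * (p:ℝ) ^ γ := mul_comm _ _
    have hhalf : ∀ j : ℕ, ((2:ℝ)⁻¹) ^ j = (2:ℝ) ^ (-(j:ℝ)) := by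
      intro j
      rw [Real.rpow_neg (by norm_num), Real.rpow_natCast, inv_pow]
    have hQ : ∀ j : ℕ, ((2:ℝ) ^ (R * j)) ^ γ = (2:ℝ) ^ (((R * j : ℕ) : ℝ) * γ) := by
      intro j
      rw [← Real.rpow_natCast 2 (R * j), ← Real.rpow_mul (by norm_num)]
    have hcoef : ∀ j : ℕ,
        s ^ (j+1) * s ^ (M + R * (j+1)) / W j ≤ s ^ (R + 2) * ((2:ℝ)⁻¹) ^ j := by
      intro j
      rw [div_le_iff₀ (hWpos j)]
      have hclaim2 : s ^ (j+1) * s ^ (R * (j+1)) ≤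
          s ^ (R + 1) * (((2:ℝ)⁻¹) ^ j * ((2:ℝ) ^ (R * j)) ^ γ) := by
        rw [e1 (j+1), e1 (R * (j+1)), e1 (R + 1), hhalf j, hQ j,
          ← Real.rpow_add (by norm_num : (0:ℝ) < 2),
          ← Real.rpow_add (by norm_num : (0:ℝ) < 2),
          ← Real.rpow_add (by norm_num : (0:ℝ) < 2)]
        apply Real.rpow_le_rpow_of_exponent_le one_le_two
        push_cast
        have hexp : (R:ℝ) * (γ - ν) = R * γ - R * ν := by ring
        have hR'' : ν + 1 + (R:ℝ) * ν ≤ (R:ℝ) * γ := by linarith [hR', hexp]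
        have hj0 : (0:ℝ) ≤ (j:ℝ) := Nat.cast_nonneg j
        nlinarith [mul_le_mul_of_nonneg_left hR'' hj0]
      calc s ^ (j+1) * s ^ (M + R * (j+1))
          = s ^ M * (s ^ (j+1) * s ^ (R * (j+1))) := by rw [pow_add]; ring
        _ ≤ (s * (p:ℝ) ^ γ) * (s ^ (R + 1) * (((2:ℝ)⁻¹) ^ j * ((2:ℝ) ^ (R * j)) ^ γ)) := by
            refine mul_le_mul hsM hclaim2 ?_ ?_
            · positivity
            · positivity
        _ = s ^ (R + 2) * ((2:ℝ)⁻¹) ^ j * W j := by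
            rw [hWsplit j]; ring
    -- assemble
    have hterm : ∀ j ∈ Finset.range q,
        s ^ (j+1) * d (x (c j)) (x (c (j+1))) ≤ (s ^ (R + 2) * T) * ((2:ℝ)⁻¹) ^ j := by
      intro j _
      have hblk : d (x (c j)) (x (c (j+1))) ≤
          s ^ (M + R * (j+1)) * ∑ i ∈ Finset.Ico (c j) (c (j+1)), d (x i) (x (i+1)) :=
        bmetric_aux_dyadic d s hs hd_nonneg hrefl hd_tri x
          (M + R * (j+1)) (c j) (c (j+1)) (hmono j) (hlen j)
      have h1 : d (x (c j)) (x (c (j+1))) ≤ s ^ (M + R * (j+1)) * (T / W j) :=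
        le_trans hblk (mul_le_mul_of_nonneg_left (hseg j) (pow_nonneg hs0.le _))
      calc s ^ (j+1) * d (x (c j)) (x (c (j+1)))
          ≤ s ^ (j+1) * (s ^ (M + R * (j+1)) * (T / W j)) :=
            mul_le_mul_of_nonneg_left h1 (pow_nonneg hs0.le _)
        _ = (s ^ (j+1) * s ^ (M + R * (j+1)) / W j) * T := by ring
        _ ≤ (s ^ (R + 2) * ((2:ℝ)⁻¹) ^ j) * T :=
            mul_le_mul_of_nonneg_right (hcoef j) hT0
        _ = (s ^ (R + 2) * T) * ((2:ℝ)⁻¹) ^ j := by ring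
    have hmain : d (x p) (x q) ≤ C * T := by
      calc d (x p) (x q) = d (x (c 0)) (x (c q)) := by rw [hc0, hcq]
        _ ≤ ∑ j ∈ Finset.range q, s ^ (j+1) * d (x (c j)) (x (c (j+1))) :=
            bmetric_aux_chain d s hs hrefl hd_tri q (fun j => x (c j))
        _ ≤ ∑ j ∈ Finset.range q, (s ^ (R + 2) * T) * ((2:ℝ)⁻¹) ^ j :=
            Finset.sum_le_sum hterm
        _ = (s ^ (R + 2) * T) * ∑ j ∈ Finset.range q, ((2:ℝ)⁻¹) ^ j :=
            (Finset.mul_sum (Finset.range q) (fun j => ((2:ℝ)⁻¹) ^ j)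
              (s ^ (R + 2) * T)).symm
        _ ≤ (s ^ (R + 2) * T) * 2 := by
            have hgeo : (∑ j ∈ Finset.range q, ((2:ℝ)⁻¹) ^ j) ≤ 2 := by
              have := sum_geometric_two_le q
              have h12 : ((2:ℝ)⁻¹) = 1/2 := by norm_num
              rw [h12]
              exact this
            exact mul_le_mul_of_nonneg_left hgeo
              (mul_nonneg (pow_nonneg hs0.le _) hT0)
        _ = C * T := by rw [hCdef]; ring
    calc d (x p) (x q) ≤ C * T := hmain
      _ < C * (ε / C) := mul_lt_mul_of_pos_left hTlt hC0
      _ = ε := by field_simp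
  intro m hm n hn
  rcases le_total m n with h | h
  · exact key m n hm h
  · rw [hd_symm]
    exact key n m hn h
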